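/- Fix a prime p and integers m, n ≥ 1. Let κ = 𝔽_{p^m} and let k be an algebraically closed field of characteristic p. Let f¹, f² : I → {0,1} be functions with f¹ ≠ f² which are comparable, i.e. f¹(τ) ≤ f²(τ) for all τ ∈ I, or f²(τ) ≤ f¹(τ) for all τ ∈ I. Then the only W_n(k)-linear map M(f¹)_n → M(f²)_n commuting with F, V and the W_n(κ)-actions is the zero map. -/

import Mathlib

set_option linter.unusedSectionVars false
set_option linter.unusedVariables false
set_option maxHeartbeats 1000000



/-- The ring homomorphism on truncated Witt vectors induced functorially by a
ring homomorphism `f : R →+* S` (acting coordinatewise). -/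
noncomputable def TruncatedWittVector.mapRingHom {p : ℕ} [Fact p.Prime] (n : ℕ)
    {R S : Type*} [CommRing R] [CommRing S] (f : R →+* S) :
    TruncatedWittVector p n R →+* TruncatedWittVector p n S :=
  RingHom.liftOfRightInverse (WittVector.truncate n) TruncatedWittVector.out
    TruncatedWittVector.truncateFun_out
    ⟨(WittVector.truncate n).comp (WittVector.map f), by
      intro x hx
      rw [WittVector.mem_ker_truncate] at hx
      rw [RingHom.mem_ker, RingHom.comp_apply, ← RingHom.mem_ker,
        WittVector.mem_ker_truncate]
      intro i hi
      rw [WittVector.map_coeff, hx i hi, map_zero]⟩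

section Dieudonne

variable (p n : ℕ) [Fact p.Prime] (κ k : Type*) [CommRing κ] [Field k]
  [CharP k p] [PerfectField k]

/-- The `W_n(κ)`-action on the Dieudonné module `M(f)_n`, i.e. the free
`W_n(k)`-module on the set `I` of ring homomorphisms `κ → k`, determined by
`c • e_τ = W_n(τ)(c) • e_τ`. -/
noncomputable def wittAct (c : TruncatedWittVector p n κ)
    (v : (κ →+* k) → TruncatedWittVector p n k) :
    (κ →+* k) → TruncatedWittVector p n k :=
  fun τ => TruncatedWittVector.mapRingHom n τ c * v τ

/-- The Frobenius `F` of the Dieudonné module `M(f)_n`: the additive,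
`σ`-semilinear map determined by `F e_τ = p ^ (f τ) • e_{τ+1}`, where
`τ + 1 = frobenius ∘ τ` is the successor of `τ`. -/
noncomputable def wittF (f : (κ →+* k) → ℕ)
    (v : (κ →+* k) → TruncatedWittVector p n k) :
    (κ →+* k) → TruncatedWittVector p n k :=
  fun τ =>
    (p : TruncatedWittVector p n k) ^ f ((frobeniusEquiv k p).symm.toRingHom.comp τ) *
      TruncatedWittVector.mapRingHom n (frobenius k p)
        (v ((frobeniusEquiv k p).symm.toRingHom.comp τ))

/-- The Verschiebung `V` of the Dieudonné module `M(f)_n`: the additive,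
`σ⁻¹`-semilinear map determined by `V e_{τ+1} = p ^ (1 - f τ) • e_τ`. -/
noncomputable def wittV (f : (κ →+* k) → ℕ)
    (v : (κ →+* k) → TruncatedWittVector p n k) :
    (κ →+* k) → TruncatedWittVector p n k :=
  fun τ =>
    (p : TruncatedWittVector p n k) ^ (1 - f τ) *
      TruncatedWittVector.mapRingHom n (frobeniusEquiv k p).symm.toRingHom
        (v ((frobenius k p).comp τ))

end Dieudonne



namespace TruncatedWittVector
variable {p : ℕ} [Fact p.Prime] {n : ℕ} {R S : Type*} [CommRing R] [CommRing S]

theorem mapRingHom_truncate (f : R →+* S) (y : WittVector p R) :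
    mapRingHom n f (WittVector.truncate n y) = WittVector.truncate n (WittVector.map f y) :=
  RingHom.liftOfRightInverse_comp_apply _ _ _ _ y

theorem coeff_mapRingHom (f : R →+* S) (x : TruncatedWittVector p n R) (i : Fin n) :
    (mapRingHom n f x).coeff i = f (x.coeff i) := by
  have h : WittVector.truncate n x.out = x := x.truncateFun_out
  conv_lhs => rw [← h]
  rw [mapRingHom_truncate, WittVector.coeff_truncate, WittVector.map_coeff, coeff_out]

/-- The "constant coefficient" ring homomorphism on truncated Witt vectors. -/
noncomputable def cc (hn0 : 0 < n) : TruncatedWittVector p n R →+* R :=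
  RingHom.liftOfRightInverse (WittVector.truncate n) TruncatedWittVector.out
    TruncatedWittVector.truncateFun_out
    ⟨WittVector.constantCoeff, by
      intro x hx
      rw [WittVector.mem_ker_truncate] at hx
      rw [RingHom.mem_ker, WittVector.constantCoeff_apply]
      exact hx 0 hn0⟩

theorem cc_truncate (hn0 : 0 < n) (y : WittVector p R) :
    cc hn0 (WittVector.truncate n y) = y.coeff 0 :=
  RingHom.liftOfRightInverse_comp_apply _ _ _ _ y

theorem cc_apply (hn0 : 0 < n) (x : TruncatedWittVector p n R) :
    cc hn0 x = x.coeff ⟨0, hn0⟩ := by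
  have h : WittVector.truncate n x.out = x := x.truncateFun_out
  conv_lhs => rw [← h]
  rw [cc_truncate]
  exact coeff_out x ⟨0, hn0⟩

variable {K : Type*} [Field K] [CharP K p]

theorem my_p_pow_zero : (p : TruncatedWittVector p n K) ^ n = 0 := by
  have h : (p : TruncatedWittVector p n K) = WittVector.truncate n (p : WittVector p K) := by
    simp
  rw [h, ← map_pow]
  ext i
  rw [WittVector.coeff_truncate, WittVector.coeff_p_pow_eq_zero]; · simp
  exact (Nat.ne_of_lt i.2)

theorem my_isUnit (x : TruncatedWittVector p n K) (hn0 : 0 < n)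
    (hx : x.coeff ⟨0, hn0⟩ ≠ 0) : IsUnit x := by
  have h0 : x.out.coeff 0 ≠ 0 := by
    have := coeff_out x ⟨0, hn0⟩
    simpa using this ▸ hx
  have := (WittVector.isUnit_of_coeff_zero_ne_zero x.out h0).map (WittVector.truncate n)
  rwa [show WittVector.truncate n x.out = x from x.truncateFun_out] at this

variable [PerfectRing K p]

theorem frob_symm_frob (x : TruncatedWittVector p n K) :
    mapRingHom n (frobenius K p)
      (mapRingHom n (frobeniusEquiv K p).symm.toRingHom x) = x := by
  ext i
  rw [coeff_mapRingHom, coeff_mapRingHom]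
  exact frobenius_apply_frobeniusEquiv_symm K p _

end TruncatedWittVector

theorem exists_gen (κ : Type*) [Field κ] [Fintype κ] :
    ∃ g : κˣ, (∀ x : κ, x = 0 ∨ ∃ i : ℕ, x = (g : κ) ^ i)
      ∧ orderOf g = Fintype.card κ - 1 := by
  classical
  obtain ⟨g, hg⟩ := IsCyclic.exists_generator (α := κˣ)
  refine ⟨g, fun x => ?_, ?_⟩
  · by_cases hx : x = 0
    · exact Or.inl hx
    · obtain ⟨i, hi⟩ := ((isOfFinOrder_of_finite g).mem_powers_iff_mem_zpowers).2
        (hg (Units.mk0 x hx))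
      exact Or.inr ⟨i, by simpa using congrArg Units.val hi.symm⟩
  · rw [orderOf_eq_card_of_forall_mem_zpowers hg, ← Fintype.card_units,
      Nat.card_eq_fintype_card]

section FF
variable {p m : ℕ} [Fact p.Prime] {κ k : Type*} [Field κ] [Fintype κ] [CharP κ p]
  [Field k] [CharP k p]

/-- successor on embeddings -/
noncomputable def frS (κ k : Type*) [Field κ] [Field k] (p : ℕ) [Fact p.Prime] [CharP k p]
    (τ : κ →+* k) : κ →+* k := (frobenius k p).comp τ

theorem frS_iter_apply (j : ℕ) (τ : κ →+* k) (x : κ) :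
    ((frS κ k p)^[j] τ) x = τ x ^ p ^ j := by
  induction j with
  | zero => simp
  | succ j ih =>
    rw [Function.iterate_succ_apply', pow_succ, pow_mul, ← ih]
    rfl

theorem frS_iter_m (hcard : Fintype.card κ = p ^ m) (τ : κ →+* k) :
    (frS κ k p)^[m] τ = τ := by
  ext x
  rw [frS_iter_apply, ← map_pow, ← hcard, FiniteField.pow_card]

theorem frS_iter_mul_m (hcard : Fintype.card κ = p ^ m) (r : ℕ) (τ : κ →+* k) :
    (frS κ k p)^[r * m] τ = τ := by
  induction r with
  | zero => simp
  | succ r ih => rw [Nat.succ_mul, Function.iterate_add_apply, frS_iter_m hcard, ih]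

theorem frS_injective : Function.Injective (frS κ k p) := by
  intro τ τ' h
  ext x
  have := congrArg (fun f : κ →+* k => f x) h
  exact frobenius_inj k p this

theorem frS_iter_injOn (hcard : Fintype.card κ = p ^ m)
    {i j : ℕ} (hi : i < m) (hj : j < m) (τ : κ →+* k)
    (h : (frS κ k p)^[i] τ = (frS κ k p)^[j] τ) : i = j := by
  obtain ⟨g, hgen, hord⟩ := exists_gen κ
  clear hgen
  suffices H : ∀ i j : ℕ, i ≤ j → j < m →
      (frS κ k p)^[i] τ = (frS κ k p)^[j] τ → i = j by
    rcases le_total i j with hle | hle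
    · exact H i j hle hj h
    · exact (H j i hle hi h.symm).symm
  clear hi hj h
  intro i j hle hj h
  · obtain ⟨d, rfl⟩ := Nat.exists_eq_add_of_le hle
    by_contra hne
    have hd : 0 < d := by omega
    have h2 : τ = (frS κ k p)^[d] τ := by
      have := (frS_injective (κ := κ) (k := k) (p := p)).iterate i
        (a₁ := τ) (a₂ := (frS κ k p)^[d] τ)
      apply this
      rwa [Function.iterate_add_apply] at h
    have h3 : (g : κ) = (g : κ) ^ p ^ d := by
      have := congrArg (fun f : κ →+* k => f (g : κ)) h2
      simp only [frS_iter_apply] at this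
      exact (τ.injective (by rw [map_pow]; exact this))
    have h4 : g ^ (p ^ d - 1) = 1 := by
      have hg2 : g = g ^ p ^ d := Units.ext (by simpa using h3)
      have hpd : 1 ≤ p ^ d := Nat.one_le_pow _ _ (Fact.out : p.Prime).pos
      have : g ^ (p ^ d - 1) * g = 1 * g := by
        rw [one_mul, ← pow_succ, Nat.sub_add_cancel hpd, ← hg2]
      exact mul_right_cancel this
    have h5 : orderOf g ∣ p ^ d - 1 := orderOf_dvd_of_pow_eq_one h4
    rw [hord, hcard] at h5
    have hp2 : 2 ≤ p := (Fact.out : p.Prime).two_le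
    have hpd1 : 0 < p ^ d - 1 := by
      have : 2 ≤ p ^ d := le_trans hp2 (Nat.le_self_pow (by omega) p)
      omega
    have h6 : p ^ m - 1 ≤ p ^ d - 1 := Nat.le_of_dvd hpd1 h5
    have h7 : p ^ m ≤ p ^ d := by
      have h1m : 1 ≤ p ^ m := Nat.one_le_pow _ _ (by omega)
      omega
    have : m ≤ d := (Nat.pow_le_pow_iff_right hp2).1 h7
    omega

theorem emb_finite (hcard : Fintype.card κ = p ^ m) : Finite (κ →+* k) := by
  classical
  obtain ⟨g, hgen, -⟩ := exists_gen κ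
  letI : Algebra (ZMod p) κ := ZMod.algebra κ p
  letI : Algebra (ZMod p) k := ZMod.algebra k p
  have hint : IsIntegral (ZMod p) ((g : κˣ) : κ) := IsIntegral.of_finite (ZMod p) _
  set μ := minpoly (ZMod p) ((g : κˣ) : κ) with hμdef
  set ψ := algebraMap (ZMod p) k with hψdef
  have hμ0 : μ.map ψ ≠ 0 :=
    Polynomial.map_ne_zero (minpoly.ne_zero hint)
  set rs := (μ.map ψ).roots.toFinset with hrs
  have hmem : ∀ σ : κ →+* k, σ ((g : κˣ) : κ) ∈ rs := by
    intro σ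
    rw [hrs, Multiset.mem_toFinset, Polynomial.mem_roots hμ0]
    show Polynomial.eval _ _ = 0
    rw [Polynomial.eval_map, show ψ = σ.comp (algebraMap (ZMod p) κ) from RingHom.ext_zmod _ _,
      ← Polynomial.hom_eval₂, ← Polynomial.aeval_def, minpoly.aeval, map_zero]
  have hinj : ∀ σ σ' : κ →+* k, σ ((g : κˣ) : κ) = σ' ((g : κˣ) : κ) → σ = σ' := by
    intro σ σ' h
    ext x
    rcases hgen x with rfl | ⟨i, rfl⟩
    · simp
    · rw [map_pow, map_pow, h]
  exact Finite.of_injective (fun σ : κ →+* k => (⟨σ _, hmem σ⟩ : rs))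
    (fun σ σ' h => hinj _ _ (congrArg Subtype.val h))

theorem emb_card_le (hcard : Fintype.card κ = p ^ m) [Fintype (κ →+* k)] :
    Fintype.card (κ →+* k) ≤ m := by
  classical
  obtain ⟨g, hgen, -⟩ := exists_gen κ
  letI : Algebra (ZMod p) κ := ZMod.algebra κ p
  letI : Algebra (ZMod p) k := ZMod.algebra k p
  have hint : IsIntegral (ZMod p) ((g : κˣ) : κ) := IsIntegral.of_finite (ZMod p) _
  set μ := minpoly (ZMod p) ((g : κˣ) : κ) with hμdef
  have hrank : Module.finrank (ZMod p) κ = m := by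
    have h1 : Fintype.card κ = Fintype.card (ZMod p) ^ Module.finrank (ZMod p) κ :=
      Module.card_eq_pow_finrank
    rw [ZMod.card, hcard] at h1
    exact (Nat.pow_right_injective (Fact.out : p.Prime).two_le h1.symm)
  have hdeg : μ.natDegree ≤ m := hrank ▸ minpoly.natDegree_le ((g : κˣ) : κ)
  set ψ := algebraMap (ZMod p) k with hψdef
  have hμ0 : μ.map ψ ≠ 0 :=
    Polynomial.map_ne_zero (minpoly.ne_zero hint)
  set rs := (μ.map ψ).roots.toFinset with hrs
  have hmem : ∀ σ : κ →+* k, σ ((g : κˣ) : κ) ∈ rs := by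
    intro σ
    rw [hrs, Multiset.mem_toFinset, Polynomial.mem_roots hμ0]
    show Polynomial.eval _ _ = 0
    rw [Polynomial.eval_map, show ψ = σ.comp (algebraMap (ZMod p) κ) from RingHom.ext_zmod _ _,
      ← Polynomial.hom_eval₂, ← Polynomial.aeval_def, minpoly.aeval, map_zero]
  have hinj : ∀ σ σ' : κ →+* k, σ ((g : κˣ) : κ) = σ' ((g : κˣ) : κ) → σ = σ' := by
    intro σ σ' h
    ext x
    rcases hgen x with rfl | ⟨i, rfl⟩
    · simp
    · rw [map_pow, map_pow, h]
  calc Fintype.card (κ →+* k) ≤ Fintype.card rs :=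
        Fintype.card_le_of_injective (fun σ : κ →+* k => (⟨σ _, hmem σ⟩ : rs))
          (fun σ σ' h => hinj _ _ (congrArg Subtype.val h))
    _ = rs.card := Fintype.card_coe _
    _ ≤ Multiset.card (μ.map ψ).roots := Multiset.toFinset_card_le _
    _ ≤ (μ.map ψ).natDegree := Polynomial.card_roots' _
    _ ≤ μ.natDegree := Polynomial.natDegree_map_le
    _ ≤ m := hdeg

theorem emb_transitive (hcard : Fintype.card κ = p ^ m)
    (τ τ' : κ →+* k) : ∃ j, j < m ∧ (frS κ k p)^[j] τ = τ' := by
  classical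
  have hm : 1 ≤ m := by
    by_contra h
    have : m = 0 := by omega
    subst this
    have h2 : Fintype.card κ = 1 := by simpa using hcard
    exact (Fintype.one_lt_card (α := κ)).ne' h2
  haveI : Finite (κ →+* k) := emb_finite hcard
  letI : Fintype (κ →+* k) := Fintype.ofFinite _
  have hcardle : Fintype.card (κ →+* k) ≤ m := emb_card_le hcard
  set o : Fin m → (κ →+* k) := fun j => (frS κ k p)^[(j : ℕ)] τ with ho
  have oinj : Function.Injective o :=
    fun j j' h => Fin.ext (frS_iter_injOn hcard j.2 j'.2 τ h)
  have hge : m ≤ Fintype.card (κ →+* k) := by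
    simpa using Fintype.card_le_of_injective o oinj
  have obij : Function.Bijective o :=
    (Fintype.bijective_iff_injective_and_card o).2 ⟨oinj, by simp; omega⟩
  obtain ⟨j, hj⟩ := obij.2 τ'
  exact ⟨j, j.2, hj⟩

end FF

/-- iteration lemma, forward form -/
theorem iter_rec {W : Type*} [CommRing W] (ρ : W →+* W) {I : Type*} (s : I → I)
    (P : W) (hρP : ρ P = P) (δ : I → ℕ) (b : I → W)
    (h : ∀ τ, b (s τ) = P ^ δ τ * ρ (b τ)) :
    ∀ N τ, b (s^[N] τ) =
      P ^ (∑ i ∈ Finset.range N, δ (s^[i] τ)) * (⇑ρ)^[N] (b τ) := by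
  intro N
  induction N with
  | zero => intro τ; simp
  | succ N ih =>
    intro τ
    rw [Function.iterate_succ_apply', h, ih, map_mul, map_pow, hρP,
      ← Function.iterate_succ_apply' (⇑ρ), Finset.sum_range_succ, pow_add]
    ring

/-- iteration lemma, backward form -/
theorem iter_rec2 {W : Type*} [CommRing W] (ρ : W →+* W) {I : Type*} (s : I → I)
    (P : W) (hρP : ρ P = P) (δ : I → ℕ) (b : I → W)
    (h : ∀ τ, b τ = P ^ δ τ * ρ (b (s τ))) :
    ∀ N τ, b τ =
      P ^ (∑ i ∈ Finset.range N, δ (s^[i] τ)) * (⇑ρ)^[N] (b (s^[N] τ)) := by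
  intro N
  induction N with
  | zero => intro τ; simp
  | succ N ih =>
    intro τ
    rw [h τ, ih (s τ)]
    rw [map_mul, map_pow, hρP, ← mul_assoc, ← pow_add]
    congr 1
    · rw [Finset.sum_range_succ']
      simp only [Function.iterate_succ_apply, Function.iterate_zero_apply]
      rw [Nat.add_comm]
    · rw [show s^[N] (s τ) = s^[N + 1] τ from (Function.iterate_succ_apply s N τ).symm,
        ← Function.iterate_succ_apply' (⇑ρ), Function.iterate_succ_apply]

namespace TruncatedWittVector
variable {p : ℕ} [Fact p.Prime] {n : ℕ} {K : Type*} [Field K] [CharP K p] [PerfectRing K p]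

theorem symm_frob_frob (x : TruncatedWittVector p n K) :
    mapRingHom n (frobeniusEquiv K p).symm.toRingHom
      (mapRingHom n (frobenius K p) x) = x := by
  ext i
  rw [coeff_mapRingHom, coeff_mapRingHom]
  exact frobeniusEquiv_symm_apply_frobenius K p _

end TruncatedWittVector

theorem pre_frS {p : ℕ} [Fact p.Prime] {κ k : Type*} [Field κ] [Field k] [CharP k p]
    [PerfectRing k p] (τ : κ →+* k) :
    ((frobeniusEquiv k p).symm.toRingHom).comp (frS κ k p τ) = τ := by
  ext x
  exact frobeniusEquiv_symm_apply_frobenius k p (τ x)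

theorem frS_pre {p : ℕ} [Fact p.Prime] {κ k : Type*} [Field κ] [Field k] [CharP k p]
    [PerfectRing k p] (τ : κ →+* k) :
    frS κ k p (((frobeniusEquiv k p).symm.toRingHom).comp τ) = τ := by
  ext x
  exact frobenius_apply_frobeniusEquiv_symm k p (τ x)


section Dieudonne2

variable (p n : ℕ) [Fact p.Prime] (κ k : Type*) [CommRing κ] [Field k]
  [CharP k p] [PerfectField k]

open Classical in
/-- The standard basis vector `e_τ`. -/
noncomputable def eW (τ : κ →+* k) : (κ →+* k) → TruncatedWittVector p n k :=
  fun τ' => if τ' = τ then 1 else 0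

end Dieudonne2


/-- The vanishing part of Lemma 3.2 of the paper, at the level of Dieudonné
modules (k-points): for `κ = 𝔽_{p^m}` and `k` algebraically closed of
characteristic `p`, if `f¹ ≠ f²` are comparable `{0,1}`-valued functions on
the set `I` of embeddings `κ → k`, then the only `W_n(k)`-linear map
`M(f¹)_n → M(f²)_n` commuting with `F`, `V` and the `W_n(κ)`-actions is the
zero map. -/
theorem stmt6 (p m n : ℕ) [Fact p.Prime] (hm : 1 ≤ m) (hn : 1 ≤ n)
    (κ k : Type*) [Field κ] [Fintype κ] [CharP κ p]
    (hcard : Fintype.card κ = p ^ m)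
    [Field k] [IsAlgClosed k] [CharP k p]
    (f₁ f₂ : (κ →+* k) → ℕ) (hf₁ : ∀ τ, f₁ τ ≤ 1) (hf₂ : ∀ τ, f₂ τ ≤ 1)
    (hne : f₁ ≠ f₂)
    (hcomp : (∀ τ, f₁ τ ≤ f₂ τ) ∨ (∀ τ, f₂ τ ≤ f₁ τ))
    (φ : ((κ →+* k) → TruncatedWittVector p n k) →
      ((κ →+* k) → TruncatedWittVector p n k))
    (hlin : IsLinearMap (TruncatedWittVector p n k) φ)
    (hF : φ ∘ wittF p n κ k f₁ = wittF p n κ k f₂ ∘ φ)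
    (hV : φ ∘ wittV p n κ k f₁ = wittV p n κ k f₂ ∘ φ)
    (hact : ∀ c, φ ∘ wittAct p n κ k c = wittAct p n κ k c ∘ φ) :
    φ = 0 := by
  classical
  have hn0 : 0 < n := hn
  obtain ⟨g, hgen, -⟩ := exists_gen κ
  have hevalinj : ∀ σ σ' : κ →+* k, σ ((g : κˣ) : κ) = σ' ((g : κˣ) : κ) → σ = σ' := by
    intro σ σ' h
    ext x
    rcases hgen x with rfl | ⟨i, rfl⟩
    · simp
    · rw [map_pow, map_pow, h]
  haveI : Finite (κ →+* k) := emb_finite hcard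
  letI : Fintype (κ →+* k) := Fintype.ofFinite _
  set a : (κ →+* k) → TruncatedWittVector p n k := fun τ => φ (eW p n κ k τ) τ with ha
  -- Step A: diagonality
  have hdiag : ∀ τ τ', φ (eW p n κ k τ) τ' = if τ' = τ then a τ else 0 := by
    intro τ τ'
    by_cases h : τ' = τ
    · subst h
      rw [if_pos rfl]
    · rw [if_neg h]
      set c₀ : TruncatedWittVector p n κ :=
        WittVector.truncate n (WittVector.teichmuller p ((g : κˣ) : κ)) with hc₀
      have hM : ∀ σ : κ →+* k,
          TruncatedWittVector.cc hn0 (TruncatedWittVector.mapRingHom n σ c₀)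
            = σ ((g : κˣ) : κ) := by
        intro σ
        rw [hc₀, TruncatedWittVector.mapRingHom_truncate, TruncatedWittVector.cc_truncate,
          WittVector.map_coeff, WittVector.teichmuller_coeff_zero]
      have key := congrFun (congrFun (hact c₀) (eW p n κ k τ)) τ'
      simp only [Function.comp_apply] at key
      have h1 : wittAct p n κ k c₀ (eW p n κ k τ)
          = (TruncatedWittVector.mapRingHom n τ c₀) • eW p n κ k τ := by
        funext s
        simp only [wittAct, eW, Pi.smul_apply, smul_eq_mul, mul_ite, mul_one, mul_zero]
        by_cases hs : s = τ
        · subst hs; simp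
        · simp [hs]
      rw [h1, hlin.map_smul] at key
      simp only [Pi.smul_apply, smul_eq_mul, wittAct] at key
      have hsub : (TruncatedWittVector.mapRingHom n τ c₀
          - TruncatedWittVector.mapRingHom n τ' c₀) * φ (eW p n κ k τ) τ' = 0 := by
        rw [sub_mul, key, sub_self]
      have hgg : τ ((g : κˣ) : κ) ≠ τ' ((g : κˣ) : κ) := fun hq => h (hevalinj τ' τ hq.symm)
      have hu : IsUnit (TruncatedWittVector.mapRingHom n τ c₀
          - TruncatedWittVector.mapRingHom n τ' c₀) := by
        apply TruncatedWittVector.my_isUnit _ hn0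
        rw [← TruncatedWittVector.cc_apply hn0, map_sub, hM, hM]
        exact sub_ne_zero.2 hgg
      exact (hu.mul_right_eq_zero).1 hsub
  -- decomposition of φ
  have hdecomp : ∀ v τ', φ v τ' = v τ' * a τ' := by
    intro v τ'
    have hv : v = ∑ τ : (κ →+* k), v τ • eW p n κ k τ := by
      funext s
      rw [Finset.sum_apply]
      rw [Finset.sum_eq_single s
        (fun b _ hb => by
          simp only [Pi.smul_apply, smul_eq_mul, eW]
          rw [if_neg (fun hc => hb hc.symm)]
          exact mul_zero _)
        (fun hs => absurd (Finset.mem_univ s) hs)]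
      simp [eW]
    have hsum : φ (∑ τ : (κ →+* k), v τ • eW p n κ k τ)
        = ∑ τ : (κ →+* k), φ (v τ • eW p n κ k τ) :=
      map_sum (IsLinearMap.mk' φ hlin) _ _
    calc φ v τ' = φ (∑ τ : (κ →+* k), v τ • eW p n κ k τ) τ' := by rw [← hv]
      _ = (∑ τ : (κ →+* k), φ (v τ • eW p n κ k τ)) τ' := by rw [hsum]
      _ = ∑ τ : (κ →+* k), v τ * φ (eW p n κ k τ) τ' := by
          rw [Finset.sum_apply]
          exact Finset.sum_congr rfl (fun τ _ => by rw [hlin.map_smul]; rfl)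
      _ = v τ' * a τ' := by
          rw [Finset.sum_eq_single τ'
            (fun b _ hb => by rw [hdiag, if_neg (fun hc => hb hc.symm), mul_zero])
            (fun hs => absurd (Finset.mem_univ τ') hs)]
  -- the F relation
  have hrelF : ∀ τ, (p : TruncatedWittVector p n k) ^ (f₁ τ) * a (frS κ k p τ)
      = (p : TruncatedWittVector p n k) ^ (f₂ τ) *
        TruncatedWittVector.mapRingHom n (frobenius k p) (a τ) := by
    intro τ
    have key := congrFun (congrFun hF (eW p n κ k τ)) (frS κ k p τ)
    simp only [Function.comp_apply] at key
    have h1 : wittF p n κ k f₁ (eW p n κ k τ)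
        = ((p : TruncatedWittVector p n k) ^ (f₁ τ)) • eW p n κ k (frS κ k p τ) := by
      funext s
      simp only [wittF, eW, Pi.smul_apply, smul_eq_mul]
      by_cases hs : s = frS κ k p τ
      · subst hs
        rw [pre_frS τ]
        simp
      · have hne2 : (frobeniusEquiv k p).symm.toRingHom.comp s ≠ τ := by
          intro hc
          exact hs (by rw [← frS_pre (p := p) s, hc])
        rw [if_neg hne2, if_neg hs]
        simp
    have e1 : φ (wittF p n κ k f₁ (eW p n κ k τ)) (frS κ k p τ)
        = (p : TruncatedWittVector p n k) ^ f₁ τ * a (frS κ k p τ) := by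
      rw [h1, hlin.map_smul]
      simp only [Pi.smul_apply, smul_eq_mul]
      rfl
    have e2 : wittF p n κ k f₂ (φ (eW p n κ k τ)) (frS κ k p τ)
        = (p : TruncatedWittVector p n k) ^ f₂ τ *
          TruncatedWittVector.mapRingHom n (frobenius k p) (a τ) := by
      simp only [wittF]
      rw [pre_frS τ]
    rw [← e1, ← e2]
    exact key
  -- the V relation (after applying σ)
  have hrelV : ∀ τ, (p : TruncatedWittVector p n k) ^ (1 - f₁ τ) *
      TruncatedWittVector.mapRingHom n (frobenius k p) (a τ)
      = (p : TruncatedWittVector p n k) ^ (1 - f₂ τ) * a (frS κ k p τ) := by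
    intro τ
    have key := congrFun (congrFun hV (eW p n κ k (frS κ k p τ))) τ
    simp only [Function.comp_apply] at key
    have h1 : wittV p n κ k f₁ (eW p n κ k (frS κ k p τ))
        = ((p : TruncatedWittVector p n k) ^ (1 - f₁ τ)) • eW p n κ k τ := by
      funext s
      simp only [wittV, eW, Pi.smul_apply, smul_eq_mul]
      by_cases hs : s = τ
      · rw [hs, if_pos (show (frobenius k p).comp τ = frS κ k p τ from rfl), if_pos rfl]
        simp
      · have hne2 : (frobenius k p).comp s ≠ frS κ k p τ := fun hc =>
          hs (frS_injective hc)
        rw [if_neg hne2, if_neg hs]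
        simp
    have e1 : φ (wittV p n κ k f₁ (eW p n κ k (frS κ k p τ))) τ
        = (p : TruncatedWittVector p n k) ^ (1 - f₁ τ) * a τ := by
      rw [h1, hlin.map_smul]
      simp only [Pi.smul_apply, smul_eq_mul]
      rfl
    have e2 : wittV p n κ k f₂ (φ (eW p n κ k (frS κ k p τ))) τ
        = (p : TruncatedWittVector p n k) ^ (1 - f₂ τ) *
          TruncatedWittVector.mapRingHom n (frobeniusEquiv k p).symm.toRingHom
            (a (frS κ k p τ)) := by
      simp only [wittV]
      simp [hdiag, frS]
    rw [e1, e2] at key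
    have key3 := congrArg (TruncatedWittVector.mapRingHom n (frobenius k p)) key
    rw [map_mul, map_mul, map_pow, map_pow, map_natCast,
      TruncatedWittVector.frob_symm_frob] at key3
    exact key3
  -- counting lemma
  have hcount : ∀ (δ : (κ →+* k) → ℕ) (τ₀ : κ →+* k), 1 ≤ δ τ₀ → ∀ τ,
      n ≤ ∑ i ∈ Finset.range (n * m), δ ((frS κ k p)^[i] τ) := by
    intro δ τ₀ hδ τ
    obtain ⟨j, hjm, hjτ⟩ := emb_transitive hcard τ τ₀
    have horb : ∀ r, r < n → (frS κ k p)^[j + r * m] τ = τ₀ := by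
      intro r hr
      rw [Function.iterate_add_apply, frS_iter_mul_m hcard r τ, hjτ]
    calc n = ∑ _r ∈ Finset.range n, 1 := by simp
      _ ≤ ∑ r ∈ Finset.range n, δ ((frS κ k p)^[j + r * m] τ) :=
          Finset.sum_le_sum (fun r hr => by rw [horb r (Finset.mem_range.1 hr)]; exact hδ)
      _ = ∑ i ∈ (Finset.range n).image (fun r => j + r * m), δ ((frS κ k p)^[i] τ) := by
          rw [Finset.sum_image]
          intro x _ y _ hxy
          have hx2 : x * m = y * m := Nat.add_left_cancel hxy
          exact Nat.eq_of_mul_eq_mul_right (by omega) hx2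
      _ ≤ ∑ i ∈ Finset.range (n * m), δ ((frS κ k p)^[i] τ) := by
          apply Finset.sum_le_sum_of_subset
          intro x hx
          simp only [Finset.mem_image, Finset.mem_range] at hx ⊢
          obtain ⟨r, hr, rfl⟩ := hx
          calc j + r * m < m + r * m := by omega
            _ ≤ m + (n - 1) * m := Nat.add_le_add_left (Nat.mul_le_mul_right m (by omega)) m
            _ = n * m := by
                have h1 : n - 1 + 1 = n := by omega
                calc m + (n - 1) * m = (n - 1 + 1) * m := by ring
                  _ = n * m := by rw [h1]
  have hzero : ∀ D : ℕ, n ≤ D → (p : TruncatedWittVector p n k) ^ D = 0 := by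
    intro D hD
    obtain ⟨c, rfl⟩ := Nat.exists_eq_add_of_le hD
    rw [pow_add, TruncatedWittVector.my_p_pow_zero, zero_mul]
  -- vanishing of a
  have ha0 : ∀ τ, a τ = 0 := by
    obtain ⟨τ₀, hτ₀⟩ := Function.ne_iff.1 hne
    rcases hcomp with hcle | hcle
    · -- case f₁ ≤ f₂
      have hrec : ∀ τ, a (frS κ k p τ) = (p : TruncatedWittVector p n k) ^ (f₂ τ - f₁ τ) *
          TruncatedWittVector.mapRingHom n (frobenius k p) (a τ) := by
        intro τ
        rcases Nat.lt_or_ge (f₁ τ) (f₂ τ) with hlt | hge2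
        · have h1 : f₁ τ = 0 := by have := hf₂ τ; omega
          have h2 : f₂ τ = 1 := by have := hf₂ τ; omega
          have hh := hrelF τ
          rw [h1, h2] at hh
          rw [h1, h2]
          simpa using hh
        · have heq : f₁ τ = f₂ τ := le_antisymm (hcle τ) hge2
          rw [heq, Nat.sub_self, pow_zero, one_mul]
          rcases Nat.eq_zero_or_pos (f₂ τ) with h0 | h1
          · have hh := hrelF τ
            rw [heq, h0] at hh
            simpa using hh
          · have hf1 : 1 - f₂ τ = 0 := by omega
            have hh := hrelV τ
            rw [heq, hf1] at hh
            simpa using hh.symm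
      intro τ
      have hit := iter_rec (TruncatedWittVector.mapRingHom n (frobenius k p)) (frS κ k p)
        ((p : ℕ) : TruncatedWittVector p n k) (map_natCast _ p)
        (fun τ => f₂ τ - f₁ τ) a hrec (n * m) τ
      rw [show (frS κ k p)^[n * m] τ = τ from frS_iter_mul_m hcard n τ] at hit
      rw [hzero _ (hcount (fun τ => f₂ τ - f₁ τ) τ₀
        (show 1 ≤ f₂ τ₀ - f₁ τ₀ by have h1 := hcle τ₀; have h2 := hf₂ τ₀; omega) τ),
        zero_mul] at hit
      exact hit
    · -- case f₂ ≤ f₁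
      have hrec : ∀ τ, a τ = (p : TruncatedWittVector p n k) ^ (f₁ τ - f₂ τ) *
          TruncatedWittVector.mapRingHom n (frobeniusEquiv k p).symm.toRingHom
            (a (frS κ k p τ)) := by
        intro τ
        have hstep : TruncatedWittVector.mapRingHom n (frobenius k p) (a τ)
            = (p : TruncatedWittVector p n k) ^ (f₁ τ - f₂ τ) * a (frS κ k p τ) := by
          rcases Nat.lt_or_ge (f₂ τ) (f₁ τ) with hlt | hge2
          · have h1 : f₂ τ = 0 := by have := hf₁ τ; omega
            have h2 : f₁ τ = 1 := by have := hf₁ τ; omega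
            have hh := hrelF τ
            rw [h1, h2] at hh
            rw [h1, h2]
            simpa using hh.symm
          · have heq : f₂ τ = f₁ τ := le_antisymm (hcle τ) hge2
            rw [← heq, Nat.sub_self, pow_zero, one_mul]
            rcases Nat.eq_zero_or_pos (f₁ τ) with h0 | h1
            · have hh := hrelF τ
              rw [heq, h0] at hh
              simpa using hh.symm
            · have hf1 : 1 - f₁ τ = 0 := by omega
              have hh := hrelV τ
              rw [heq, hf1] at hh
              simpa using hh
        have hc := congrArg
          (TruncatedWittVector.mapRingHom n (frobeniusEquiv k p).symm.toRingHom) hstep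
        rw [TruncatedWittVector.symm_frob_frob, map_mul, map_pow, map_natCast] at hc
        exact hc
      intro τ
      have hit := iter_rec2
        (TruncatedWittVector.mapRingHom n (frobeniusEquiv k p).symm.toRingHom) (frS κ k p)
        ((p : ℕ) : TruncatedWittVector p n k) (map_natCast _ p)
        (fun τ => f₁ τ - f₂ τ) a hrec (n * m) τ
      rw [hzero _ (hcount (fun τ => f₁ τ - f₂ τ) τ₀
        (show 1 ≤ f₁ τ₀ - f₂ τ₀ by have h1 := hcle τ₀; have h2 := hf₁ τ₀; omega) τ),
        zero_mul] at hit
      exact hit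
  funext v τ'
  simp only [Pi.zero_apply]
  rw [hdecomp, ha0, mul_zero]
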